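/- For every real number C ≥ 1, every ε > 0, and every integer m ≥ 3, there exists a smooth map f : ℝ² → ℝ^m such that M = graph f is an entire spacelike stationary graph in ℝ₁^{2+m} whose W-function satisfies (inf_{ℝ²} W)·(sup_{ℝ²} W) = C and 0 < sup_{ℝ²} W − inf_{ℝ²} W < ε. In particular, for C > 1 this gives non-flat entire spacelike stationary graphs with W ≥ 1 everywhere. -/

import Mathlib

open Matrix MeasureTheory Filter

noncomputable section

/-- Partial derivative `∂F/∂x_i` of a function on `ℝ²`. -/
def pd (F : (Fin 2 → ℝ) → ℝ) (i : Fin 2) (x : Fin 2 → ℝ) : ℝ :=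
  fderiv ℝ F x (Pi.single i 1)

/-- Induced metric matrix of `graph f ⊂ ℝ₁^{2+m}`:
`g_{ij} = δ_{ij} + Σ_{α<m-1} ∂f_α/∂x_i ∂f_α/∂x_j − ∂f_{m}/∂x_i ∂f_{m}/∂x_j`
(the last coordinate is the timelike one). -/
def gMat {m : ℕ} (f : (Fin 2 → ℝ) → (Fin m → ℝ)) (x : Fin 2 → ℝ) :
    Matrix (Fin 2) (Fin 2) ℝ :=
  Matrix.of fun i j => (if i = j then (1:ℝ) else 0)
    + ∑ α : Fin m, (if (α : ℕ) = m - 1 then (-1:ℝ) else 1)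
        * pd (fun y => f y α) i x * pd (fun y => f y α) j x

/-- The W-function `W = √(det g)`. -/
def Wf {m : ℕ} (f : (Fin 2 → ℝ) → (Fin m → ℝ)) (x : Fin 2 → ℝ) : ℝ :=
  Real.sqrt ((gMat f x).det)

/-- The graph of `f` is an entire spacelike graph: `g` is positive definite everywhere. -/
def Spacelike {m : ℕ} (f : (Fin 2 → ℝ) → (Fin m → ℝ)) : Prop :=
  ∀ x, (gMat f x).PosDef

/-- The graph of `f` is stationary (vanishing mean curvature):
`Σ_i ∂_i(W g^{ij}) = 0` and `Σ_{i,j} ∂_i(W g^{ij} ∂f_α/∂x_j) = 0`. -/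
def Stationary {m : ℕ} (f : (Fin 2 → ℝ) → (Fin m → ℝ)) : Prop :=
  (∀ x, ∀ j : Fin 2,
     ∑ i : Fin 2, pd (fun y => Wf f y * (gMat f y)⁻¹ i j) i x = 0) ∧
  (∀ x, ∀ α : Fin m,
     ∑ i : Fin 2, pd (fun y => ∑ j : Fin 2,
        Wf f y * (gMat f y)⁻¹ i j * pd (fun z => f z α) j y) i x = 0)

/-- `f` is affine linear. -/
def AffineLinear {m : ℕ} (f : (Fin 2 → ℝ) → (Fin m → ℝ)) : Prop :=
  ∃ (L : (Fin 2 → ℝ) →ₗ[ℝ] (Fin m → ℝ)) (c : Fin m → ℝ), ∀ x, f x = L x + c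

/-- A real-valued function on `ℝ²` is affine linear. -/
def AffineLinR (h : (Fin 2 → ℝ) → ℝ) : Prop :=
  ∃ (L : (Fin 2 → ℝ) →ₗ[ℝ] ℝ) (c : ℝ), ∀ x, h x = L x + c

/-- `h : ℝ² → ℝ` is harmonic: smooth with `∂²h/∂x₁² + ∂²h/∂x₂² = 0`. -/
def HarmonicR (h : (Fin 2 → ℝ) → ℝ) : Prop :=
  ContDiff ℝ (⊤ : ℕ∞) h ∧
  ∀ x, pd (fun y => pd h 0 y) 0 x + pd (fun y => pd h 1 y) 1 x = 0

/-- `y` is a lightlike vector of `ℝ₁^m`: `y₁² + ⋯ + y_{m-1}² − y_m² = 0`. -/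
def Lightlike {m : ℕ} (y : Fin m → ℝ) : Prop :=
  ∑ α : Fin m, (if (α : ℕ) = m - 1 then (-1:ℝ) else 1) * y α * y α = 0

/-- `f = h·y₀ + y₁` with `h` a nonlinear harmonic function, `y₀` a nonzero lightlike
vector and `y₁` a constant vector. -/
def LightlikeForm {m : ℕ} (f : (Fin 2 → ℝ) → (Fin m → ℝ)) : Prop :=
  ∃ (h : (Fin 2 → ℝ) → ℝ) (y₀ y₁ : Fin m → ℝ),
    HarmonicR h ∧ ¬ AffineLinR h ∧ Lightlike y₀ ∧ y₀ ≠ 0 ∧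
    ∀ x, f x = fun α => h x * y₀ α + y₁ α

/-- The linear change of variables `x₁ = u₁, x₂ = a·u₁ + b·u₂`. -/
def Tmap (a b : ℝ) (u : Fin 2 → ℝ) : Fin 2 → ℝ := ![u 0, a * u 0 + b * u 1]

/-- Jacobian matrix of `Tmap a b`. -/
def Amat (a b : ℝ) : Matrix (Fin 2) (Fin 2) ℝ := !![1, 0; a, b]

-- AUX PART (to be inserted before stmt8)
section Aux

lemma hasFDerivAt_uv {u v : ℝ → ℝ} {u' v' : ℝ} {x : Fin 2 → ℝ}
    (hu : HasDerivAt u u' (x 0)) (hv : HasDerivAt v v' (x 1)) :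
    HasFDerivAt (fun y : Fin 2 → ℝ => u (y 0) * v (y 1))
      (u (x 0) • (v' • (ContinuousLinearMap.proj (R := ℝ) (φ := fun _ : Fin 2 => ℝ) 1))
        + v (x 1) • (u' • (ContinuousLinearMap.proj (R := ℝ) (φ := fun _ : Fin 2 => ℝ) 0))) x := by
  have h0 : HasFDerivAt (fun y : Fin 2 → ℝ => u (y 0))
      (u' • (ContinuousLinearMap.proj (R := ℝ) (φ := fun _ : Fin 2 => ℝ) 0)) x :=
    hu.comp_hasFDerivAt x (((ContinuousLinearMap.proj (R := ℝ) (φ := fun _ : Fin 2 => ℝ) 0).hasFDerivAt (x := x)) : HasFDerivAt (fun y : Fin 2 → ℝ => y 0) _ x)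
  have h1 : HasFDerivAt (fun y : Fin 2 → ℝ => v (y 1))
      (v' • (ContinuousLinearMap.proj (R := ℝ) (φ := fun _ : Fin 2 => ℝ) 1)) x :=
    hv.comp_hasFDerivAt x (((ContinuousLinearMap.proj (R := ℝ) (φ := fun _ : Fin 2 => ℝ) 1).hasFDerivAt (x := x)) : HasFDerivAt (fun y : Fin 2 → ℝ => y 1) _ x)
  exact h0.mul h1

lemma pd_uv0 {u v : ℝ → ℝ} {u' v' : ℝ} {x : Fin 2 → ℝ}
    (hu : HasDerivAt u u' (x 0)) (hv : HasDerivAt v v' (x 1)) :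
    pd (fun y => u (y 0) * v (y 1)) 0 x = u' * v (x 1) := by
  rw [pd, (hasFDerivAt_uv hu hv).fderiv]
  simp [Pi.single_eq_same]
  ring

lemma pd_uv1 {u v : ℝ → ℝ} {u' v' : ℝ} {x : Fin 2 → ℝ}
    (hu : HasDerivAt u u' (x 0)) (hv : HasDerivAt v v' (x 1)) :
    pd (fun y => u (y 0) * v (y 1)) 1 x = u (x 0) * v' := by
  rw [pd, (hasFDerivAt_uv hu hv).fderiv]
  simp [Pi.single_eq_same]

lemma pd_const (k : ℝ) (i : Fin 2) (x : Fin 2 → ℝ) : pd (fun _ => k) i x = 0 := by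
  rw [pd]; simp

-- derivative helpers
lemma hd_lin (c t : ℝ) : HasDerivAt (fun s : ℝ => c * s) c t := by
  simpa using (hasDerivAt_id t).const_mul c

lemma hd_kcosh (k t : ℝ) : HasDerivAt (fun s : ℝ => k * Real.cosh s) (k * Real.sinh t) t :=
  (Real.hasDerivAt_cosh t).const_mul k

lemma hd_ksinh (k t : ℝ) : HasDerivAt (fun s : ℝ => k * Real.sinh s) (k * Real.cosh t) t :=
  (Real.hasDerivAt_sinh t).const_mul k

lemma hd_cosb (b t : ℝ) : HasDerivAt (fun s : ℝ => Real.cos (s / b)) (-(Real.sin (t / b)) / b) t := by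
  have h := (Real.hasDerivAt_cos (t / b)).comp t ((hasDerivAt_id t).div_const b)
  have e : -Real.sin (t / b) * (1 / b) = -(Real.sin (t / b)) / b := by ring
  rw [← e]; exact h

lemma hd_sinb (b t : ℝ) : HasDerivAt (fun s : ℝ => Real.sin (s / b)) (Real.cos (t / b) / b) t := by
  have h := (Real.hasDerivAt_sin (t / b)).comp t ((hasDerivAt_id t).div_const b)
  have e : Real.cos (t / b) * (1 / b) = Real.cos (t / b) / b := by ring
  rw [← e]; exact h

/-- The explicit example map. -/
def fex (b c r : ℝ) (m : ℕ) (x : Fin 2 → ℝ) (α : Fin m) : ℝ :=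
  if (α : ℕ) = 0 then c * x 0
  else if (α : ℕ) = 1 then r * Real.cosh (x 0) * Real.cos (x 1 / b)
  else if (α : ℕ) = m - 1 then r * Real.sinh (x 0) * Real.cos (x 1 / b)
  else 0

-- partial derivatives of the basic functions
lemma pdA0 (c : ℝ) (x : Fin 2 → ℝ) : pd (fun y : Fin 2 → ℝ => c * y 0) 0 x = c := by
  have e : (fun y : Fin 2 → ℝ => c * y 0) = fun y : Fin 2 → ℝ =>
      (fun s : ℝ => c * s) (y 0) * (fun _ : ℝ => (1:ℝ)) (y 1) := by funext y; simp
  rw [e, pd_uv0 (hd_lin c (x 0)) (hasDerivAt_const (x 1) (1:ℝ))]; simp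

lemma pdA1 (c : ℝ) (x : Fin 2 → ℝ) : pd (fun y : Fin 2 → ℝ => c * y 0) 1 x = 0 := by
  have e : (fun y : Fin 2 → ℝ => c * y 0) = fun y : Fin 2 → ℝ =>
      (fun s : ℝ => c * s) (y 0) * (fun _ : ℝ => (1:ℝ)) (y 1) := by funext y; simp
  rw [e, pd_uv1 (hd_lin c (x 0)) (hasDerivAt_const (x 1) (1:ℝ))]; simp

lemma pdB0 (k b : ℝ) (x : Fin 2 → ℝ) :
    pd (fun y : Fin 2 → ℝ => k * Real.cosh (y 0) * Real.cos (y 1 / b)) 0 x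
      = k * Real.sinh (x 0) * Real.cos (x 1 / b) :=
  pd_uv0 (hd_kcosh k (x 0)) (hd_cosb b (x 1))

lemma pdB1 (k b : ℝ) (x : Fin 2 → ℝ) :
    pd (fun y : Fin 2 → ℝ => k * Real.cosh (y 0) * Real.cos (y 1 / b)) 1 x
      = k * Real.cosh (x 0) * (-(Real.sin (x 1 / b)) / b) :=
  pd_uv1 (hd_kcosh k (x 0)) (hd_cosb b (x 1))

lemma pdC0 (k b : ℝ) (x : Fin 2 → ℝ) :
    pd (fun y : Fin 2 → ℝ => k * Real.sinh (y 0) * Real.cos (y 1 / b)) 0 x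
      = k * Real.cosh (x 0) * Real.cos (x 1 / b) :=
  pd_uv0 (hd_ksinh k (x 0)) (hd_cosb b (x 1))

lemma pdC1 (k b : ℝ) (x : Fin 2 → ℝ) :
    pd (fun y : Fin 2 → ℝ => k * Real.sinh (y 0) * Real.cos (y 1 / b)) 1 x
      = k * Real.sinh (x 0) * (-(Real.sin (x 1 / b)) / b) :=
  pd_uv1 (hd_ksinh k (x 0)) (hd_cosb b (x 1))

lemma pdD1 (k b : ℝ) (x : Fin 2 → ℝ) :
    pd (fun y : Fin 2 → ℝ => k * Real.cosh (y 0) * Real.sin (y 1 / b)) 1 x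
      = k * Real.cosh (x 0) * (Real.cos (x 1 / b) / b) :=
  pd_uv1 (hd_kcosh k (x 0)) (hd_sinb b (x 1))

lemma pdE1 (k b : ℝ) (x : Fin 2 → ℝ) :
    pd (fun y : Fin 2 → ℝ => k * Real.sinh (y 0) * Real.sin (y 1 / b)) 1 x
      = k * Real.sinh (x 0) * (Real.cos (x 1 / b) / b) :=
  pd_uv1 (hd_ksinh k (x 0)) (hd_sinb b (x 1))

end Aux
section Aux2

variable {b c r : ℝ} {m : ℕ}

lemma fex_fun (b c r : ℝ) (m : ℕ) (α : Fin m) :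
    (fun y : Fin 2 → ℝ => fex b c r m y α) =
      if (α : ℕ) = 0 then (fun y : Fin 2 → ℝ => c * y 0)
      else if (α : ℕ) = 1 then (fun y : Fin 2 → ℝ => r * Real.cosh (y 0) * Real.cos (y 1 / b))
      else if (α : ℕ) = m - 1 then (fun y : Fin 2 → ℝ => r * Real.sinh (y 0) * Real.cos (y 1 / b))
      else (fun _ => 0) := by
  funext y; unfold fex
  by_cases h0 : (α : ℕ) = 0
  · rw [if_pos h0, if_pos h0]
  · rw [if_neg h0, if_neg h0]
    by_cases h1 : (α : ℕ) = 1
    · rw [if_pos h1, if_pos h1]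
    · rw [if_neg h1, if_neg h1]
      by_cases h2 : (α : ℕ) = m - 1
      · rw [if_pos h2, if_pos h2]
      · rw [if_neg h2, if_neg h2]

/-- first partials of fex -/
def P0 (b c r : ℝ) (m : ℕ) (α : Fin m) (x : Fin 2 → ℝ) : ℝ :=
  if (α : ℕ) = 0 then c
  else if (α : ℕ) = 1 then r * Real.sinh (x 0) * Real.cos (x 1 / b)
  else if (α : ℕ) = m - 1 then r * Real.cosh (x 0) * Real.cos (x 1 / b)
  else 0

def P1 (b c r : ℝ) (m : ℕ) (α : Fin m) (x : Fin 2 → ℝ) : ℝ :=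
  if (α : ℕ) = 0 then 0
  else if (α : ℕ) = 1 then r * Real.cosh (x 0) * (-(Real.sin (x 1 / b)) / b)
  else if (α : ℕ) = m - 1 then r * Real.sinh (x 0) * (-(Real.sin (x 1 / b)) / b)
  else 0

lemma pd_fex0 (α : Fin m) (x : Fin 2 → ℝ) :
    pd (fun y => fex b c r m y α) 0 x = P0 b c r m α x := by
  rw [fex_fun b c r m α]
  unfold P0
  by_cases h0 : (α : ℕ) = 0
  · rw [if_pos h0, if_pos h0]; exact pdA0 c x
  · rw [if_neg h0, if_neg h0]
    by_cases h1 : (α : ℕ) = 1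
    · rw [if_pos h1, if_pos h1]; exact pdB0 r b x
    · rw [if_neg h1, if_neg h1]
      by_cases h2 : (α : ℕ) = m - 1
      · rw [if_pos h2, if_pos h2]; exact pdC0 r b x
      · rw [if_neg h2, if_neg h2]; exact pd_const 0 0 x

lemma pd_fex1 (α : Fin m) (x : Fin 2 → ℝ) :
    pd (fun y => fex b c r m y α) 1 x = P1 b c r m α x := by
  rw [fex_fun b c r m α]
  unfold P1
  by_cases h0 : (α : ℕ) = 0
  · rw [if_pos h0, if_pos h0]; exact pdA1 c x
  · rw [if_neg h0, if_neg h0]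
    by_cases h1 : (α : ℕ) = 1
    · rw [if_pos h1, if_pos h1]; exact pdB1 r b x
    · rw [if_neg h1, if_neg h1]
      by_cases h2 : (α : ℕ) = m - 1
      · rw [if_pos h2, if_pos h2]; exact pdC1 r b x
      · rw [if_neg h2, if_neg h2]; exact pd_const 0 1 x

lemma pd_fex (α : Fin m) (i : Fin 2) (x : Fin 2 → ℝ) :
    pd (fun y => fex b c r m y α) i x =
      if i = 0 then P0 b c r m α x else P1 b c r m α x := by
  fin_cases i
  · simpa using pd_fex0 α x
  · simpa using pd_fex1 α x

lemma sum3 (hm : 3 ≤ m) (G : Fin m → ℝ)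
    (hG : ∀ α : Fin m, (α : ℕ) ≠ 0 → (α : ℕ) ≠ 1 → (α : ℕ) ≠ m - 1 → G α = 0) :
    ∑ α, G α = G ⟨0, by omega⟩ + G ⟨1, by omega⟩ + G ⟨m - 1, by omega⟩ := by
  have h01 : (⟨0, by omega⟩ : Fin m) ≠ ⟨1, by omega⟩ := by simp [Fin.ext_iff]
  have h0m : (⟨0, by omega⟩ : Fin m) ≠ ⟨m - 1, by omega⟩ := by simp [Fin.ext_iff]; omega
  have h1m : (⟨1, by omega⟩ : Fin m) ≠ ⟨m - 1, by omega⟩ := by simp [Fin.ext_iff]; omega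
  have hsub : ({⟨0, by omega⟩, ⟨1, by omega⟩, ⟨m - 1, by omega⟩} : Finset (Fin m)) ⊆ Finset.univ :=
    Finset.subset_univ _
  rw [← Finset.sum_subset hsub]
  · rw [Finset.sum_insert (by simp [h01, h0m]), Finset.sum_insert (by simp [h1m]),
      Finset.sum_singleton]
    ring
  · intro α _ hα
    simp only [Finset.mem_insert, Finset.mem_singleton] at hα
    push_neg at hα
    obtain ⟨n0, n1, nm⟩ := hα
    exact hG α (by simpa [Fin.ext_iff] using n0) (by simpa [Fin.ext_iff] using n1)
      (by simpa [Fin.ext_iff] using nm)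

end Aux2
section Aux3

/-- the conformal factor -/
def lam (b r : ℝ) (x : Fin 2 → ℝ) : ℝ := b ^ 2 + r ^ 2 * Real.sin (x 1 / b) ^ 2

lemma lam_pos {b : ℝ} (hb : 0 < b) (r : ℝ) (x : Fin 2 → ℝ) : 0 < lam b r x := by
  have h2 : r ^ 2 * Real.sin (x 1 / b) ^ 2 = (r * Real.sin (x 1 / b)) ^ 2 := by ring
  have h3 := sq_nonneg (r * Real.sin (x 1 / b))
  unfold lam; nlinarith

lemma sumKey {b c r : ℝ} {m : ℕ} (hm : 3 ≤ m) (x : Fin 2 → ℝ) (i j : Fin 2) :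
    (∑ α : Fin m, (if (α : ℕ) = m - 1 then (-1:ℝ) else 1)
        * pd (fun y => fex b c r m y α) i x * pd (fun y => fex b c r m y α) j x)
      = (if i = 0 then P0 b c r m ⟨0, by omega⟩ x else P1 b c r m ⟨0, by omega⟩ x)
        * (if j = 0 then P0 b c r m ⟨0, by omega⟩ x else P1 b c r m ⟨0, by omega⟩ x)
        + (if i = 0 then P0 b c r m ⟨1, by omega⟩ x else P1 b c r m ⟨1, by omega⟩ x)
        * (if j = 0 then P0 b c r m ⟨1, by omega⟩ x else P1 b c r m ⟨1, by omega⟩ x)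
        - (if i = 0 then P0 b c r m ⟨m - 1, by omega⟩ x else P1 b c r m ⟨m - 1, by omega⟩ x)
        * (if j = 0 then P0 b c r m ⟨m - 1, by omega⟩ x else P1 b c r m ⟨m - 1, by omega⟩ x) := by
  have e0 : ((⟨0, by omega⟩ : Fin m) : ℕ) = 0 := rfl
  have e1 : ((⟨1, by omega⟩ : Fin m) : ℕ) = 1 := rfl
  have em : ((⟨m - 1, by omega⟩ : Fin m) : ℕ) = m - 1 := rfl
  have ne0m : ¬ ((⟨0, by omega⟩ : Fin m) : ℕ) = m - 1 := by rw [e0]; omega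
  have ne1m : ¬ ((⟨1, by omega⟩ : Fin m) : ℕ) = m - 1 := by rw [e1]; omega
  have hvan : ∀ α : Fin m, (α : ℕ) ≠ 0 → (α : ℕ) ≠ 1 → (α : ℕ) ≠ m - 1 →
      (if (α : ℕ) = m - 1 then (-1:ℝ) else 1)
        * pd (fun y => fex b c r m y α) i x * pd (fun y => fex b c r m y α) j x = 0 := by
    intro α hα0 hα1 hαm
    rw [pd_fex α i x, pd_fex α j x]
    unfold P0 P1
    rw [if_neg hαm]
    split_ifs <;> ring
  rw [sum3 hm (fun α => (if (α : ℕ) = m - 1 then (-1:ℝ) else 1)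
        * pd (fun y => fex b c r m y α) i x * pd (fun y => fex b c r m y α) j x) hvan]
  rw [pd_fex, pd_fex, pd_fex, pd_fex, pd_fex, pd_fex]
  rw [if_neg ne0m, if_neg ne1m, if_pos em]
  ring

lemma P_values {b c r : ℝ} {m : ℕ} (hm : 3 ≤ m) (x : Fin 2 → ℝ) :
    P0 b c r m ⟨0, by omega⟩ x = c ∧ P1 b c r m ⟨0, by omega⟩ x = 0 ∧
    P0 b c r m ⟨1, by omega⟩ x = r * Real.sinh (x 0) * Real.cos (x 1 / b) ∧
    P1 b c r m ⟨1, by omega⟩ x = r * Real.cosh (x 0) * (-(Real.sin (x 1 / b)) / b) ∧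
    P0 b c r m ⟨m - 1, by omega⟩ x = r * Real.cosh (x 0) * Real.cos (x 1 / b) ∧
    P1 b c r m ⟨m - 1, by omega⟩ x = r * Real.sinh (x 0) * (-(Real.sin (x 1 / b)) / b) := by
  have e1 : ((⟨1, by omega⟩ : Fin m) : ℕ) = 1 := rfl
  have em : ((⟨m - 1, by omega⟩ : Fin m) : ℕ) = m - 1 := rfl
  have ne10 : ¬ ((⟨1, by omega⟩ : Fin m) : ℕ) = 0 := by rw [e1]; omega
  have nem0 : ¬ ((⟨m - 1, by omega⟩ : Fin m) : ℕ) = 0 := by rw [em]; omega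
  have nem1 : ¬ ((⟨m - 1, by omega⟩ : Fin m) : ℕ) = 1 := by rw [em]; omega
  refine ⟨?_, ?_, ?_, ?_, ?_, ?_⟩
  · unfold P0; rw [if_pos rfl]
  · unfold P1; rw [if_pos rfl]
  · unfold P0; rw [if_neg ne10, if_pos rfl]
  · unfold P1; rw [if_neg ne10, if_pos rfl]
  · unfold P0; rw [if_neg nem0, if_neg nem1, if_pos rfl]
  · unfold P1; rw [if_neg nem0, if_neg nem1, if_pos rfl]

lemma gMat_eq {b c r : ℝ} {m : ℕ} (hm : 3 ≤ m) (hb : b ≠ 0) (hrel : 1 + c ^ 2 = b ^ 2 + r ^ 2)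
    (x : Fin 2 → ℝ) :
    gMat (fex b c r m) x = !![lam b r x, 0; 0, lam b r x / b ^ 2] := by
  obtain ⟨hP00, hP10, hP01, hP11, hP0m, hP1m⟩ := P_values (b := b) (c := c) (r := r) hm x
  ext i j
  rw [gMat, Matrix.of_apply, sumKey hm x i j]
  fin_cases i <;> fin_cases j <;>
      simp only [hP00, hP10, hP01, hP11, hP0m, hP1m, Fin.zero_eta, Fin.mk_one, lam] <;>
      norm_num
  · linear_combination hrel - r ^ 2 * Real.cos (x 1 / b) ^ 2 * Real.cosh_sq_sub_sinh_sq (x 0)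
      - r ^ 2 * Real.sin_sq_add_cos_sq (x 1 / b)
  · ring
  · ring
  · field_simp
    linear_combination r ^ 2 * Real.sin (x 1 / b) ^ 2 * Real.cosh_sq_sub_sinh_sq (x 0)

end Aux3
section Aux4

variable {b c r : ℝ} {m : ℕ}

lemma Wf_eq (hm : 3 ≤ m) (hb : 0 < b) (hrel : 1 + c ^ 2 = b ^ 2 + r ^ 2) (x : Fin 2 → ℝ) :
    Wf (fex b c r m) x = lam b r x / b := by
  rw [Wf, gMat_eq hm hb.ne' hrel x, Matrix.det_fin_two_of]
  have h1 : lam b r x * (lam b r x / b ^ 2) - 0 * 0 = (lam b r x / b) ^ 2 := by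
    field_simp; ring
  rw [h1, Real.sqrt_sq (le_of_lt (div_pos (lam_pos hb r x) hb))]

lemma inv_eq (hm : 3 ≤ m) (hb : 0 < b) (hrel : 1 + c ^ 2 = b ^ 2 + r ^ 2) (x : Fin 2 → ℝ) :
    (gMat (fex b c r m) x)⁻¹ = !![1 / lam b r x, 0; 0, b ^ 2 / lam b r x] := by
  have hl := lam_pos hb r x
  apply Matrix.inv_eq_right_inv
  rw [gMat_eq hm hb.ne' hrel x]
  ext i j
  fin_cases i <;> fin_cases j <;>
    simp [Matrix.mul_apply, Fin.sum_univ_two, Matrix.one_apply] <;>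
    field_simp

lemma Winv_eq (hm : 3 ≤ m) (hb : 0 < b) (hrel : 1 + c ^ 2 = b ^ 2 + r ^ 2) (x : Fin 2 → ℝ) :
    ∀ i j : Fin 2, Wf (fex b c r m) x * (gMat (fex b c r m) x)⁻¹ i j
      = !![1 / b, 0; 0, b] i j := by
  have hl := (lam_pos hb r x).ne'
  intro i j
  rw [Wf_eq hm hb hrel x, inv_eq hm hb hrel x]
  fin_cases i <;> fin_cases j <;> simp <;> field_simp <;> ring

lemma spacelike_fex (hm : 3 ≤ m) (hb : 0 < b) (hrel : 1 + c ^ 2 = b ^ 2 + r ^ 2) :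
    Spacelike (fex b c r m) := by
  intro x
  have hl := lam_pos hb r x
  rw [gMat_eq hm hb.ne' hrel x]
  refine Matrix.PosDef.of_dotProduct_mulVec_pos ?_ ?_
  · ext i j
    fin_cases i <;> fin_cases j <;> simp [Matrix.conjTranspose_apply]
  · intro v hv
    have h2 : 0 < lam b r x / b ^ 2 := by positivity
    have hv' : v 0 ≠ 0 ∨ v 1 ≠ 0 := by
      by_contra h
      push_neg at h
      exact hv (funext fun i => by fin_cases i <;> simp [h.1, h.2])
    simp only [dotProduct, Matrix.mulVec, Fin.sum_univ_two, star]
    rcases hv' with h | h <;>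
      · simp
        nlinarith [sq_nonneg (v 0), sq_nonneg (v 1), sq_abs (v 0), mul_self_pos.mpr h]

end Aux4
section Aux5

variable {b c r : ℝ} {m : ℕ}

lemma stationary_fex (hm : 3 ≤ m) (hb : 0 < b) (hrel : 1 + c ^ 2 = b ^ 2 + r ^ 2) :
    Stationary (fex b c r m) := by
  have hb' : b ≠ 0 := hb.ne'
  constructor
  · intro x j
    have hconst : ∀ i j : Fin 2, (fun y => Wf (fex b c r m) y * (gMat (fex b c r m) y)⁻¹ i j)
        = (fun _ : Fin 2 → ℝ => !![1 / b, 0; 0, b] i j) :=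
      fun i j => funext fun y => Winv_eq hm hb hrel y i j
    rw [Fin.sum_univ_two, hconst 0 j, hconst 1 j, pd_const, pd_const]
    norm_num
  · intro x α
    have hin : ∀ i : Fin 2, (fun y => ∑ j : Fin 2, Wf (fex b c r m) y
          * (gMat (fex b c r m) y)⁻¹ i j * pd (fun z => fex b c r m z α) j y)
        = (fun y => !![(1:ℝ) / b, 0; 0, b] i 0 * P0 b c r m α y
            + !![(1:ℝ) / b, 0; 0, b] i 1 * P1 b c r m α y) := by
      intro i
      funext y
      rw [Fin.sum_univ_two, Winv_eq hm hb hrel y i 0, Winv_eq hm hb hrel y i 1,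
        pd_fex0 α y, pd_fex1 α y]
    rw [Fin.sum_univ_two, hin 0, hin 1]
    by_cases h0 : (α : ℕ) = 0
    · have f1 : (fun y => !![(1:ℝ) / b, 0; 0, b] 0 0 * P0 b c r m α y
          + !![(1:ℝ) / b, 0; 0, b] 0 1 * P1 b c r m α y) = (fun _ : Fin 2 → ℝ => (1 / b) * c) := by
        funext y; unfold P0 P1; rw [if_pos h0, if_pos h0]; norm_num
      have f2 : (fun y => !![(1:ℝ) / b, 0; 0, b] 1 0 * P0 b c r m α y
          + !![(1:ℝ) / b, 0; 0, b] 1 1 * P1 b c r m α y) = (fun _ : Fin 2 → ℝ => (0:ℝ)) := by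
        funext y; unfold P0 P1; rw [if_pos h0, if_pos h0]; norm_num
      rw [f1, f2, pd_const, pd_const]; norm_num
    · by_cases h1 : (α : ℕ) = 1
      · have f1 : (fun y => !![(1:ℝ) / b, 0; 0, b] 0 0 * P0 b c r m α y
            + !![(1:ℝ) / b, 0; 0, b] 0 1 * P1 b c r m α y)
            = (fun y : Fin 2 → ℝ => (r / b) * Real.sinh (y 0) * Real.cos (y 1 / b)) := by
          funext y; unfold P0 P1
          rw [if_neg h0, if_pos h1, if_neg h0, if_pos h1]
          simp; ring
        have f2 : (fun y => !![(1:ℝ) / b, 0; 0, b] 1 0 * P0 b c r m α y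
            + !![(1:ℝ) / b, 0; 0, b] 1 1 * P1 b c r m α y)
            = (fun y : Fin 2 → ℝ => (-r) * Real.cosh (y 0) * Real.sin (y 1 / b)) := by
          funext y; unfold P0 P1
          rw [if_neg h0, if_pos h1, if_neg h0, if_pos h1]
          simp; field_simp
        rw [f1, f2, pdC0 (r / b) b x, pdD1 (-r) b x]
        field_simp
        ring
      · by_cases h2 : (α : ℕ) = m - 1
        · have f1 : (fun y => !![(1:ℝ) / b, 0; 0, b] 0 0 * P0 b c r m α y
              + !![(1:ℝ) / b, 0; 0, b] 0 1 * P1 b c r m α y)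
              = (fun y : Fin 2 → ℝ => (r / b) * Real.cosh (y 0) * Real.cos (y 1 / b)) := by
            funext y; unfold P0 P1
            rw [if_neg h0, if_neg h1, if_pos h2, if_neg h0, if_neg h1, if_pos h2]
            simp; ring
          have f2 : (fun y => !![(1:ℝ) / b, 0; 0, b] 1 0 * P0 b c r m α y
              + !![(1:ℝ) / b, 0; 0, b] 1 1 * P1 b c r m α y)
              = (fun y : Fin 2 → ℝ => (-r) * Real.sinh (y 0) * Real.sin (y 1 / b)) := by
            funext y; unfold P0 P1
            rw [if_neg h0, if_neg h1, if_pos h2, if_neg h0, if_neg h1, if_pos h2]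
            simp; field_simp
          rw [f1, f2, pdB0 (r / b) b x, pdE1 (-r) b x]
          field_simp
          ring
        · have f1 : (fun y => !![(1:ℝ) / b, 0; 0, b] 0 0 * P0 b c r m α y
              + !![(1:ℝ) / b, 0; 0, b] 0 1 * P1 b c r m α y) = (fun _ : Fin 2 → ℝ => (0:ℝ)) := by
            funext y; unfold P0 P1
            rw [if_neg h0, if_neg h1, if_neg h2, if_neg h0, if_neg h1, if_neg h2]
            norm_num
          have f2 : (fun y => !![(1:ℝ) / b, 0; 0, b] 1 0 * P0 b c r m α y
              + !![(1:ℝ) / b, 0; 0, b] 1 1 * P1 b c r m α y) = (fun _ : Fin 2 → ℝ => (0:ℝ)) := by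
            funext y; unfold P0 P1
            rw [if_neg h0, if_neg h1, if_neg h2, if_neg h0, if_neg h1, if_neg h2]
            norm_num
          rw [f1, f2, pd_const, pd_const]; norm_num

lemma contDiff_fex : ContDiff ℝ (⊤ : ℕ∞) (fex b c r m) := by
  rw [contDiff_pi]
  intro α
  rw [show (fun x => fex b c r m x α) = (fun y : Fin 2 → ℝ => fex b c r m y α) from rfl,
    fex_fun b c r m α]
  have hp0 : ContDiff ℝ (⊤ : ℕ∞) (fun y : Fin 2 → ℝ => y 0) := contDiff_pi.1 contDiff_id 0
  have hp1 : ContDiff ℝ (⊤ : ℕ∞) (fun y : Fin 2 → ℝ => y 1) := contDiff_pi.1 contDiff_id 1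
  have hcos : ContDiff ℝ (⊤ : ℕ∞) (fun y : Fin 2 → ℝ => Real.cos (y 1 / b)) :=
    Real.contDiff_cos.comp (hp1.div_const b)
  split_ifs
  · exact contDiff_const.mul hp0
  · exact (contDiff_const.mul (Real.contDiff_cosh.comp hp0)).mul hcos
  · exact (contDiff_const.mul (Real.contDiff_sinh.comp hp0)).mul hcos
  · exact contDiff_const

end Aux5
section Aux6

variable {b c r : ℝ} {m : ℕ}

lemma W_formula (hm : 3 ≤ m) (hb : 0 < b) (hrel : 1 + c ^ 2 = b ^ 2 + r ^ 2) (x : Fin 2 → ℝ) :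
    Wf (fex b c r m) x = b + (r ^ 2 / b) * Real.sin (x 1 / b) ^ 2 := by
  rw [Wf_eq hm hb hrel x]
  unfold lam
  field_simp

lemma iInf_W (hm : 3 ≤ m) (hb : 0 < b) (hrel : 1 + c ^ 2 = b ^ 2 + r ^ 2) :
    (⨅ x, Wf (fex b c r m) x) = b := by
  have hq : (0:ℝ) ≤ r ^ 2 / b := by positivity
  have hlb : ∀ x, b ≤ Wf (fex b c r m) x := by
    intro x
    rw [W_formula hm hb hrel x]
    nlinarith [sq_nonneg (Real.sin (x 1 / b))]
  have hW0 : Wf (fex b c r m) (fun _ => 0) = b := by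
    rw [W_formula hm hb hrel]
    norm_num
  refine le_antisymm ?_ (le_ciInf hlb)
  calc (⨅ x, Wf (fex b c r m) x) ≤ Wf (fex b c r m) (fun _ => 0) :=
        ciInf_le ⟨b, by rintro _ ⟨x, rfl⟩; exact hlb x⟩ _
    _ = b := hW0

lemma iSup_W (hm : 3 ≤ m) (hb : 0 < b) (hrel : 1 + c ^ 2 = b ^ 2 + r ^ 2) :
    (⨆ x, Wf (fex b c r m) x) = b + r ^ 2 / b := by
  have hq : (0:ℝ) ≤ r ^ 2 / b := by positivity
  have hub : ∀ x, Wf (fex b c r m) x ≤ b + r ^ 2 / b := by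
    intro x
    rw [W_formula hm hb hrel x]
    nlinarith [Real.sin_sq_le_one (x 1 / b)]
  have hWs : Wf (fex b c r m) (fun _ => b * (Real.pi / 2)) = b + r ^ 2 / b := by
    rw [W_formula hm hb hrel]
    rw [mul_div_cancel_left₀ _ hb.ne', Real.sin_pi_div_two]
    norm_num
  refine le_antisymm (ciSup_le hub) ?_
  calc b + r ^ 2 / b = Wf (fex b c r m) (fun _ => b * (Real.pi / 2)) := hWs.symm
    _ ≤ ⨆ x, Wf (fex b c r m) x := le_ciSup ⟨b + r ^ 2 / b, by rintro _ ⟨x, rfl⟩; exact hub x⟩ _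

end Aux6

theorem stmt8' (C : ℝ) (hC : 1 ≤ C) (ε : ℝ) (hε : 0 < ε) (m : ℕ) (hm : 3 ≤ m) :
    ∃ f : (Fin 2 → ℝ) → (Fin m → ℝ),
      ContDiff ℝ (⊤ : ℕ∞) f ∧ Spacelike f ∧ Stationary f ∧
      (⨅ x, Wf f x) * (⨆ x, Wf f x) = C ∧
      0 < (⨆ x, Wf f x) - (⨅ x, Wf f x) ∧
      (⨆ x, Wf f x) - (⨅ x, Wf f x) < ε := by
  set s : ℝ := min (1/2) (ε/4) with hs
  have hs0 : 0 < s := lt_min (by norm_num) (by positivity)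
  have hs2 : s ≤ 1/2 := min_le_left _ _
  have hsε : s ≤ ε/4 := min_le_right _ _
  set b : ℝ := Real.sqrt (C - s) with hbdef
  set c : ℝ := Real.sqrt (C - 1) with hcdef
  set r : ℝ := Real.sqrt s with hrdef
  have hb2 : b ^ 2 = C - s := Real.sq_sqrt (by linarith)
  have hbpos : 0 < b := Real.sqrt_pos.mpr (by linarith)
  have hc2 : c ^ 2 = C - 1 := Real.sq_sqrt (by linarith)
  have hr2 : r ^ 2 = s := Real.sq_sqrt hs0.le
  have hrel : 1 + c ^ 2 = b ^ 2 + r ^ 2 := by rw [hc2, hb2, hr2]; ring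
  have hbhalf : 1/2 ≤ b := by nlinarith [Real.sqrt_nonneg (C - s)]
  have hinf := iInf_W (b := b) (c := c) (r := r) hm hbpos hrel
  have hsup := iSup_W (b := b) (c := c) (r := r) hm hbpos hrel
  refine ⟨fex b c r m, contDiff_fex, spacelike_fex hm hbpos hrel,
    stationary_fex hm hbpos hrel, ?_, ?_, ?_⟩
  · rw [hinf, hsup]
    have h1 : b * (b + r ^ 2 / b) = b ^ 2 + r ^ 2 := by field_simp
    rw [h1, hb2, hr2]; ring
  · rw [hinf, hsup]
    have : 0 < r ^ 2 / b := div_pos (by rw [hr2]; exact hs0) hbpos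
    linarith
  · rw [hinf, hsup]
    have h2 : r ^ 2 / b ≤ (ε/4) / (1/2) :=
      div_le_div₀ (by positivity) (by rw [hr2]; exact hsε) (by norm_num) hbhalf
    have h3 : (ε/4) / (1/2 : ℝ) = ε/2 := by ring
    linarith

/-- for every `C ≥ 1`, `ε > 0` and `m ≥ 3` there is an entire spacelike
stationary graph in `ℝ₁^{2+m}` with `(inf W)·(sup W) = C` and
`0 < sup W − inf W < ε`. -/
theorem stmt8 (C : ℝ) (hC : 1 ≤ C) (ε : ℝ) (hε : 0 < ε) (m : ℕ) (hm : 3 ≤ m) :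
    ∃ f : (Fin 2 → ℝ) → (Fin m → ℝ),
      ContDiff ℝ (⊤ : ℕ∞) f ∧ Spacelike f ∧ Stationary f ∧
      (⨅ x, Wf f x) * (⨆ x, Wf f x) = C ∧
      0 < (⨆ x, Wf f x) - (⨅ x, Wf f x) ∧
      (⨆ x, Wf f x) - (⨅ x, Wf f x) < ε := by
  exact stmt8' C hC ε hε m hm
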